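/- arXiv:0808.2252 — 2 statements merged into one kernel-verified Lean document; each statement's English description precedes it below -/
import Mathlib

section
/- Let ρ_0 be a piecewise-continuous probability density on ℝ with mean zero and finite second moment, and let ρ_t = ρ_0 * G^t be the heat-equation solution with D = 1. Define the rescaled density ρ̃_t(x) := √t·ρ_t(x√t). Then there exists a constant C such that sup_{x∈ℝ} |ρ̃_t(x) − (4π)^{-1/2}·e^{-x²/4}| ≤ C/t for all sufficiently large t. -/
open MeasureTheory Real

/-- The Gaussian heat kernel with `D = 1`: `G^t(x) = (4πt)^{-1/2}·exp(-x²/(4t))`. -/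
noncomputable def heatKernel1 (t x : ℝ) : ℝ :=
  (4 * π * t) ^ (-(1 : ℝ) / 2) * Real.exp (-x ^ 2 / (4 * t))

private lemma expbnd (s : ℝ) (hs : 0 ≤ s) : |s - 1/2| * Real.exp (-s) ≤ 1/2 := by
  rcases le_or_gt s (1/2) with h | h
  · rw [abs_of_nonpos (by linarith)]
    have h1 : Real.exp (-s) ≤ 1 := Real.exp_le_one_iff.2 (by linarith)
    nlinarith [Real.exp_pos (-s)]
  · rw [abs_of_pos (by linarith)]
    have h2 : (s/2+1)^2 ≤ Real.exp s := by
      have he : Real.exp s = Real.exp (s/2) * Real.exp (s/2) := by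
        rw [← Real.exp_add]; ring_nf
      nlinarith [Real.add_one_le_exp (s/2), Real.exp_pos (s/2)]
    have hes : (0:ℝ) < Real.exp s := Real.exp_pos s
    rw [Real.exp_neg, ← div_eq_mul_inv, div_le_iff₀ hes]
    nlinarith [sq_nonneg (s-2)]

private lemma dpsi (z : ℝ) :
    HasDerivAt (fun z : ℝ => Real.exp (-z^2/4)) (-(z/2) * Real.exp (-z^2/4)) z := by
  have h1 : HasDerivAt (fun z : ℝ => -z^2/4) (-(z/2)) z := by
    have := ((hasDerivAt_pow 2 z).div_const 4).neg
    exact (this.congr_deriv (by norm_num; ring)).congr_of_eventuallyEq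
      (Filter.Eventually.of_forall fun w => by simp only [Pi.neg_apply]; ring)
  simpa [mul_comm] using h1.exp

private lemma dpsi' (z : ℝ) :
    HasDerivAt (fun z : ℝ => -(z/2) * Real.exp (-z^2/4))
      ((z^2/4 - 1/2) * Real.exp (-z^2/4)) z := by
  have h1 : HasDerivAt (fun z : ℝ => -(z/2)) (-(1/2)) z := by
    exact ((hasDerivAt_id z).div_const 2 |>.neg).congr_of_eventuallyEq
      (Filter.Eventually.of_forall fun w => by simp)
  have := h1.mul (dpsi z)
  exact this.congr_deriv (by ring)

private lemma psibnd (z : ℝ) : |(z^2/4 - 1/2) * Real.exp (-z^2/4)| ≤ 1/2 := by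
  have h := expbnd (z^2/4) (by positivity)
  rw [abs_mul, abs_of_pos (Real.exp_pos _)]
  have : -z^2/4 = -(z^2/4) := by ring
  rw [this]
  exact h

private lemma lippsi' (z w : ℝ) :
    |(-(z/2)) * Real.exp (-z^2/4) - (-(w/2)) * Real.exp (-w^2/4)| ≤ (1/2) * |z - w| := by
  have := Convex.norm_image_sub_le_of_norm_hasDerivWithin_le
    (f := fun z : ℝ => -(z/2) * Real.exp (-z^2/4))
    (f' := fun z : ℝ => (z^2/4 - 1/2) * Real.exp (-z^2/4))
    (s := Set.univ) (C := 1/2)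
    (fun x _ => (dpsi' x).hasDerivWithinAt)
    (fun x _ => by rw [Real.norm_eq_abs]; exact psibnd x)
    convex_univ (Set.mem_univ w) (Set.mem_univ z)
  simpa [Real.norm_eq_abs] using this

/-- Second-order Taylor bound for the Gaussian. -/
private lemma taylorpsi (a b : ℝ) :
    |Real.exp (-(a-b)^2/4) - Real.exp (-a^2/4) + b * (-(a/2) * Real.exp (-a^2/4))| ≤
      (1/2) * b^2 := by
  set c := -(a/2) * Real.exp (-a^2/4) with hc
  set F := fun z : ℝ => Real.exp (-z^2/4) - c * z with hF
  have hdF : ∀ z : ℝ, HasDerivAt F (-(z/2) * Real.exp (-z^2/4) - c) z := fun z => by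
    have hlin : HasDerivAt (fun z : ℝ => c * z) c z := by
      simpa using (hasDerivAt_id z).const_mul c
    exact (dpsi z).sub hlin
  have key := Convex.norm_image_sub_le_of_norm_hasDerivWithin_le
    (f := F) (f' := fun z => -(z/2) * Real.exp (-z^2/4) - c)
    (s := Set.Icc (a - |b|) (a + |b|)) (C := (1/2) * |b|)
    (fun z _ => (hdF z).hasDerivWithinAt)
    (fun z hz => by
      have h1 := lippsi' z a
      have h2 : |z - a| ≤ |b| := by
        rw [abs_le]; constructor <;> [linarith [hz.1]; linarith [hz.2]]
      rw [Real.norm_eq_abs]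
      calc |(-(z/2)) * Real.exp (-z^2/4) - c| ≤ (1/2) * |z - a| := h1
        _ ≤ (1/2) * |b| := by linarith)
    (convex_Icc _ _)
    (x := a) (y := a - b)
    (by simp only [Set.mem_Icc]
        constructor <;> linarith [abs_nonneg b])
    (by simp only [Set.mem_Icc]
        constructor <;> linarith [neg_abs_le b, le_abs_self b])
  have hFd : F (a - b) - F a =
      Real.exp (-(a-b)^2/4) - Real.exp (-a^2/4) + b * c := by
    simp only [hF]; ring
  rw [hFd, Real.norm_eq_abs, Real.norm_eq_abs] at key
  calc |Real.exp (-(a-b)^2/4) - Real.exp (-a^2/4) + b * c|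
      ≤ (1/2) * |b| * |a - b - a| := key
    _ = (1/2) * b^2 := by
        rw [show a - b - a = -b from by ring, abs_neg, mul_assoc, abs_mul_abs_self, ← sq]

/-- Let `ρ₀` be a piecewise-continuous probability density with mean zero and finite
second moment, and `ρ_t = ρ₀ * G^t` the heat-equation solution with `D = 1`.  Then the
rescaled density `ρ̃_t(x) = √t·ρ_t(x√t)` converges uniformly, with rate `O(1/t)`, to the
Gaussian density `(4π)^{-1/2}·e^{-x²/4}` of mean `0` and variance `2`. -/
theorem rescaled_heat_solution_uniform_convergence
    (ρ₀ : ℝ → ℝ)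
    (hpc : ∃ S : Set ℝ, S.Finite ∧ ∀ x ∉ S, ContinuousAt ρ₀ x)
    (h0 : ∀ x, 0 ≤ ρ₀ x) (hint : Integrable ρ₀) (hmass : ∫ x, ρ₀ x = 1)
    (hmean : ∫ y, y * ρ₀ y = 0) (hsecond : Integrable (fun y => y ^ 2 * ρ₀ y)) :
    ∃ C T : ℝ, ∀ t ≥ T, ∀ x : ℝ,
      |Real.sqrt t * (∫ y, ρ₀ y * heatKernel1 t (x * Real.sqrt t - y))
          - (4 * π) ^ (-(1 : ℝ) / 2) * Real.exp (-x ^ 2 / 4)| ≤ C / t := by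
  have hρm := hint.aestronglyMeasurable
  set M2 := ∫ y, y ^ 2 * ρ₀ y with hM2
  have hM2nn : 0 ≤ M2 := integral_nonneg fun y => mul_nonneg (sq_nonneg y) (h0 y)
  have hπ : (0:ℝ) < 4 * π := by positivity
  have hrpos : (0:ℝ) < (4 * π) ^ (-(1:ℝ)/2) := Real.rpow_pos_of_pos hπ _
  -- integrability of y * ρ₀ y
  have hy1 : Integrable (fun y => y * ρ₀ y) := by
    refine (hint.add hsecond).mono (aestronglyMeasurable_id.mul hρm)
      (Filter.Eventually.of_forall fun y => ?_)
    simp only [Real.norm_eq_abs, abs_mul, abs_of_nonneg (h0 y), Pi.add_apply]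
    have h1 : |y| ≤ 1 + y ^ 2 := by nlinarith [sq_abs y, sq_nonneg (|y| - 1)]
    have h2 : |ρ₀ y + y ^ 2 * ρ₀ y| = ρ₀ y + y ^ 2 * ρ₀ y := by
      rw [abs_of_nonneg]
      exact add_nonneg (h0 y) (mul_nonneg (sq_nonneg y) (h0 y))
    rw [h2]; nlinarith [h0 y]
  refine ⟨(4 * π) ^ (-(1:ℝ)/2) * (M2 / 2), 1, fun t ht x => ?_⟩
  have ht0 : (0:ℝ) < t := lt_of_lt_of_le one_pos ht
  set s := Real.sqrt t with hsdef
  have hs0 : 0 < s := Real.sqrt_pos.2 ht0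
  have hs2 : s ^ 2 = t := Real.sq_sqrt ht0.le
  set ψx := Real.exp (-x ^ 2 / 4) with hψx
  set c := -(x / 2) * ψx with hcdef
  set g := fun y : ℝ => Real.exp (-(x - y / s) ^ 2 / 4) with hg
  -- kernel identity
  have hker : ∀ y, s * (ρ₀ y * heatKernel1 t (x * s - y)) =
      (4 * π) ^ (-(1:ℝ)/2) * (ρ₀ y * g y) := by
    intro y
    unfold heatKernel1
    have hmul : (4 * π * t) ^ (-(1:ℝ)/2) = (4 * π) ^ (-(1:ℝ)/2) * t ^ (-(1:ℝ)/2) :=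
      Real.mul_rpow hπ.le ht0.le
    have hst : s * t ^ (-(1:ℝ)/2) = 1 := by
      rw [hsdef, Real.sqrt_eq_rpow, ← Real.rpow_add ht0]
      norm_num
    have hxy : x * s - y = s * (x - y / s) := by field_simp
    have hexp : -(x * s - y) ^ 2 / (4 * t) = -(x - y / s) ^ 2 / 4 := by
      rw [hxy, mul_pow, hs2]
      field_simp
    rw [hmul, hexp]
    simp only [hg]
    linear_combination (ρ₀ y * ((4 * π) ^ (-(1:ℝ)/2) * Real.exp (-(x - y / s) ^ 2 / 4))) * hst
  -- pull constants out of the integral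
  have hI : s * (∫ y, ρ₀ y * heatKernel1 t (x * s - y)) =
      (4 * π) ^ (-(1:ℝ)/2) * ∫ y, ρ₀ y * g y := by
    rw [← integral_const_mul, ← integral_const_mul]
    exact integral_congr_ae (Filter.Eventually.of_forall fun y => hker y)
  -- integrability of ρ₀ * g
  have hgc : Continuous g := by
    apply Real.continuous_exp.comp
    continuity
  have hgb : ∀ y, |g y| ≤ 1 := by
    intro y
    rw [abs_of_pos (Real.exp_pos _)]
    apply Real.exp_le_one_iff.2
    have : (0:ℝ) ≤ (x - y / s) ^ 2 := sq_nonneg _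
    linarith
  have hint1 : Integrable (fun y => ρ₀ y * g y) := by
    refine hint.mono (hρm.mul hgc.aestronglyMeasurable)
      (Filter.Eventually.of_forall fun y => ?_)
    rw [Real.norm_eq_abs, Real.norm_eq_abs, abs_mul]
    calc |ρ₀ y| * |g y| ≤ |ρ₀ y| * 1 :=
          mul_le_mul_of_nonneg_left (hgb y) (abs_nonneg _)
      _ = |ρ₀ y| := mul_one _
  -- the deviation function
  set D := fun y : ℝ => ρ₀ y * (g y - ψx + y / s * c) with hD
  have hDeq : D = fun y => ρ₀ y * g y - ψx * ρ₀ y + c / s * (y * ρ₀ y) := by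
    funext y; simp only [hD]; field_simp
  have hDint : Integrable D := by
    rw [hDeq]
    exact (hint1.sub (hint.const_mul ψx)).add ((hy1.const_mul (c / s)))
  have hsub : Integrable (fun y => ρ₀ y * g y - ψx * ρ₀ y) :=
    hint1.sub (hint.const_mul ψx)
  have haddR : Integrable (fun y => c / s * (y * ρ₀ y)) := hy1.const_mul _
  have hDval : ∫ y, D y = (∫ y, ρ₀ y * g y) - ψx := by
    simp only [hDeq]
    rw [integral_add hsub haddR, integral_sub hint1 (hint.const_mul ψx),
      integral_const_mul, integral_const_mul, hmass, hmean]
    ring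
  -- pointwise bound on D
  have hDbd : ∀ y, |D y| ≤ 1 / (2 * t) * (y ^ 2 * ρ₀ y) := by
    intro y
    have htay := taylorpsi x (y / s)
    simp only [hD, abs_mul, abs_of_nonneg (h0 y)]
    have h1 : |g y - ψx + y / s * c| ≤ 1 / 2 * (y / s) ^ 2 := by
      simpa [hg, hψx, hcdef] using htay
    calc ρ₀ y * |g y - ψx + y / s * c| ≤ ρ₀ y * (1 / 2 * (y / s) ^ 2) :=
          mul_le_mul_of_nonneg_left h1 (h0 y)
      _ = 1 / (2 * t) * (y ^ 2 * ρ₀ y) := by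
          rw [div_pow, hs2]; field_simp
  have habs : |∫ y, D y| ≤ M2 / (2 * t) := by
    calc |∫ y, D y| ≤ ∫ y, |D y| := by
          simpa [Real.norm_eq_abs] using norm_integral_le_integral_norm D
      _ ≤ ∫ y, 1 / (2 * t) * (y ^ 2 * ρ₀ y) :=
          integral_mono hDint.abs (hsecond.const_mul _) hDbd
      _ = 1 / (2 * t) * M2 := integral_const_mul _ _
      _ = M2 / (2 * t) := by ring
  -- conclude
  rw [hI, ← mul_sub, abs_mul, abs_of_pos hrpos, ← hDval]
  calc (4 * π) ^ (-(1:ℝ)/2) * |∫ y, D y|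
      ≤ (4 * π) ^ (-(1:ℝ)/2) * (M2 / (2 * t)) :=
        mul_le_mul_of_nonneg_left habs hrpos.le
    _ = (4 * π) ^ (-(1:ℝ)/2) * (M2 / 2) / t := by field_simp
end

section
/- Under the same hypotheses, the rescaled distribution functions F̃_t(x) := ∫_{-∞}^{x√t} ρ_t converge uniformly to the normal distribution function N(x) = ∫_{-∞}^x (4π)^{-1/2}e^{-s²/4} ds, with sup_x |F̃_t(x) − N(x)| ≤ C'/√t for some constant C' and all sufficiently large t. -/
open MeasureTheory Real

noncomputable def gauss0 (s : ℝ) : ℝ := (4 * π) ^ (-(1 : ℝ) / 2) * Real.exp (-s ^ 2 / 4)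

lemma gauss0_cont : Continuous gauss0 := by
  unfold gauss0; fun_prop

lemma gauss0_nonneg (s : ℝ) : 0 ≤ gauss0 s := by
  unfold gauss0; positivity

lemma gauss0_integrable : Integrable gauss0 := by
  have h : gauss0 = fun s => (4 * π) ^ (-(1 : ℝ) / 2) * Real.exp (-(1/4 : ℝ) * s ^ 2) := by
    funext s; unfold gauss0; ring_nf
  rw [h]
  exact (integrable_exp_neg_mul_sq (by norm_num)).const_mul _

lemma gauss0_integral : ∫ s, gauss0 s = 1 := by
  have h : ∀ s : ℝ, gauss0 s = (4 * π) ^ (-(1 : ℝ) / 2) * Real.exp (-(1/4 : ℝ) * s ^ 2) := by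
    intro s; unfold gauss0; ring_nf
  simp_rw [h]
  rw [integral_const_mul, integral_gaussian]
  have h4 : (0:ℝ) ≤ 4 * π := by positivity
  have : π / (1/4 : ℝ) = 4 * π := by ring
  rw [this]
  rw [show (-(1:ℝ)/2) = -(1/2 : ℝ) by norm_num, Real.rpow_neg h4, ← Real.sqrt_eq_rpow]
  have : Real.sqrt (4 * π) ≠ 0 := by positivity
  field_simp

noncomputable def N0 (c : ℝ) : ℝ := ∫ s in Set.Iic c, gauss0 s

lemma N0_nonneg (c : ℝ) : 0 ≤ N0 c :=
  setIntegral_nonneg measurableSet_Iic fun s _ => gauss0_nonneg s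

lemma N0_le_one (c : ℝ) : N0 c ≤ 1 := by
  rw [← gauss0_integral]
  exact setIntegral_le_integral gauss0_integrable
    (Filter.Eventually.of_forall fun s => gauss0_nonneg s)

lemma N0_sub (a b : ℝ) : N0 b - N0 a = ∫ u in a..b, gauss0 u :=
  intervalIntegral.integral_Iic_sub_Iic gauss0_integrable.integrableOn
    gauss0_integrable.integrableOn

lemma N0_cont : Continuous N0 := by
  have h : ∀ c, N0 c = N0 0 + ∫ u in (0:ℝ)..c, gauss0 u := by
    intro c; rw [← N0_sub]; ring
  have h2 : N0 = fun c => N0 0 + ∫ u in (0:ℝ)..c, gauss0 u := funext h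
  rw [h2]
  exact continuous_const.add (intervalIntegral.continuous_primitive
    (fun a b => gauss0_integrable.intervalIntegrable) 0)

lemma gauss0_hasDerivAt (s : ℝ) :
    HasDerivAt gauss0 ((4 * π) ^ (-(1 : ℝ) / 2) * (Real.exp (-s ^ 2 / 4) * (-(2 * s) / 4))) s := by
  have h0 : HasDerivAt (fun s : ℝ => s ^ 2) (2 * s) s := by
    simpa using hasDerivAt_pow 2 s
  have h1 : HasDerivAt (fun s : ℝ => -s ^ 2 / 4) (-(2 * s) / 4) s := h0.neg.div_const 4
  exact (h1.exp).const_mul _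

lemma gauss0_lip (u v : ℝ) : |gauss0 u - gauss0 v| ≤ |u - v| := by
  have hc : (4 * π) ^ (-(1 : ℝ) / 2) ≤ 1 := by
    apply Real.rpow_le_one_of_one_le_of_nonpos
    · nlinarith [Real.pi_gt_three]
    · norm_num
  have hc0 : (0:ℝ) ≤ (4 * π) ^ (-(1 : ℝ) / 2) := Real.rpow_nonneg (by positivity) _
  have hlip : LipschitzWith 1 gauss0 := by
    apply lipschitzWith_of_nnnorm_deriv_le (fun x => (gauss0_hasDerivAt x).differentiableAt)
    intro x
    have hd := (gauss0_hasDerivAt x).deriv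
    have he : |x| * Real.exp (-x ^ 2 / 4) ≤ 1 := by
      have h1 : |x| ≤ Real.exp (x ^ 2 / 4) := by
        have h2 : |x| ≤ 1 + x ^ 2 / 4 := by nlinarith [sq_abs x, sq_nonneg (|x| - 2)]
        have h3 := Real.add_one_le_exp (x ^ 2 / 4)
        linarith
      rw [show -x ^ 2 / 4 = -(x ^ 2 / 4) by ring, Real.exp_neg]
      calc |x| * (Real.exp (x ^ 2 / 4))⁻¹
          ≤ Real.exp (x ^ 2 / 4) * (Real.exp (x ^ 2 / 4))⁻¹ :=
            mul_le_mul_of_nonneg_right h1 (inv_nonneg.mpr (Real.exp_pos _).le)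
        _ = 1 := mul_inv_cancel₀ (Real.exp_ne_zero _)
    have hexp : (0:ℝ) ≤ Real.exp (-x ^ 2 / 4) := (Real.exp_pos _).le
    have habs : |(-(2 * x) / 4)| = |x| / 2 := by
      rw [abs_div, abs_neg, abs_mul, abs_two, abs_of_nonneg (by norm_num : (0:ℝ) ≤ 4)]
      ring
    have hb : ‖deriv gauss0 x‖ ≤ 1 := by
      rw [hd, Real.norm_eq_abs, abs_mul, abs_of_nonneg hc0, abs_mul, abs_of_nonneg hexp, habs]
      nlinarith [abs_nonneg x]
    rwa [← NNReal.coe_le_coe, coe_nnnorm, NNReal.coe_one]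
  have := hlip.dist_le_mul u v
  simpa [Real.dist_eq] using this

lemma N0_taylor (x b : ℝ) : |N0 (x - b) - N0 x + b * gauss0 x| ≤ b ^ 2 := by
  have key : N0 (x - b) - N0 x = ∫ u in x..(x - b), gauss0 u := N0_sub x (x - b)
  have hconst : (∫ u in x..(x - b), gauss0 x) = -(b * gauss0 x) := by
    rw [intervalIntegral.integral_const]
    simp only [smul_eq_mul]; ring
  have hsplit : N0 (x - b) - N0 x + b * gauss0 x
      = ∫ u in x..(x - b), (gauss0 u - gauss0 x) := by
    rw [intervalIntegral.integral_sub gauss0_integrable.intervalIntegrable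
      (intervalIntegrable_const), key, hconst]
    ring
  rw [hsplit]
  have hbound := intervalIntegral.norm_integral_le_of_norm_le_const
    (C := |b|) (f := fun u => gauss0 u - gauss0 x) (a := x) (b := x - b) ?_
  · rw [Real.norm_eq_abs] at hbound
    calc |∫ u in x..(x - b), (gauss0 u - gauss0 x)| ≤ |b| * |x - b - x| := hbound
      _ = b ^ 2 := by rw [show x - b - x = -b by ring, abs_neg, ← sq_abs]; ring
  · intro u hu
    rw [Real.norm_eq_abs]
    refine le_trans (gauss0_lip u x) ?_
    rcases Set.mem_uIoc.mp hu with ⟨h1, h2⟩ | ⟨h1, h2⟩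
    · rw [abs_le]; constructor
      · have := abs_nonneg b; linarith
      · have := neg_le_abs b; linarith
    · rw [abs_le]; constructor
      · have := le_abs_self b; linarith
      · have := abs_nonneg b; linarith

lemma integral_Iic_comp_sub (f : ℝ → ℝ) (a y : ℝ) :
    ∫ s in Set.Iic a, f (s - y) = ∫ u in Set.Iic (a - y), f u := by
  rw [← integral_indicator measurableSet_Iic, ← integral_indicator measurableSet_Iic,
    ← integral_sub_right_eq_self (Set.indicator (Set.Iic (a - y)) f) y]
  congr 1
  ext x
  simp only [Set.indicator_apply, Set.mem_Iic, sub_le_sub_iff_right]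

lemma integral_Iic_comp_mul_left (g : ℝ → ℝ) (a : ℝ) {b : ℝ} (hb : 0 < b) :
    (∫ x in Set.Iic a, g (b * x)) = b⁻¹ • ∫ x in Set.Iic (b * a), g x := by
  have hm : ∀ c : ℝ, MeasurableSet (Set.Iic c) := fun c => measurableSet_Iic
  rw [← integral_indicator (hm a), ← integral_indicator (hm (b * a)),
    ← abs_of_pos (inv_pos.mpr hb), ← Measure.integral_comp_mul_left]
  congr 1
  ext1 x
  simp [Set.indicator_apply, hb]

lemma hk_nonneg {t : ℝ} (ht : 0 < t) (x : ℝ) : 0 ≤ heatKernel1 t x := by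
  unfold heatKernel1
  positivity

lemma hk_integrable {t : ℝ} (ht : 0 < t) : Integrable (heatKernel1 t) := by
  have h : heatKernel1 t = fun x => (4 * π * t) ^ (-(1 : ℝ) / 2) *
      Real.exp (-(1 / (4 * t)) * x ^ 2) := by
    funext x; unfold heatKernel1; congr 1; congr 1; field_simp
  rw [h]
  exact (integrable_exp_neg_mul_sq (by positivity)).const_mul _

lemma hk_scale {t : ℝ} (ht : 0 < t) (x : ℝ) :
    Real.sqrt t * heatKernel1 t (Real.sqrt t * x) = gauss0 x := by
  have hst : 0 < Real.sqrt t := Real.sqrt_pos.mpr ht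
  unfold heatKernel1 gauss0
  have h1 : (Real.sqrt t * x) ^ 2 = t * x ^ 2 := by
    rw [mul_pow, Real.sq_sqrt ht.le]
  have h2 : -(Real.sqrt t * x) ^ 2 / (4 * t) = -x ^ 2 / 4 := by
    rw [h1]; field_simp
  rw [h2]
  have h3 : (4 * π * t) ^ (-(1 : ℝ) / 2) = (4 * π) ^ (-(1 : ℝ) / 2) * t ^ (-(1 : ℝ) / 2) := by
    rw [Real.mul_rpow (by positivity) ht.le]
  have h4 : t ^ (-(1 : ℝ) / 2) = (Real.sqrt t)⁻¹ := by
    rw [show (-(1:ℝ)/2) = -(1/2 : ℝ) by norm_num, Real.rpow_neg ht.le, ← Real.sqrt_eq_rpow]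
  rw [h3, h4]
  field_simp

lemma hk_cdf {t : ℝ} (ht : 0 < t) (a y : ℝ) :
    ∫ s in Set.Iic a, heatKernel1 t (s - y) = N0 ((a - y) / Real.sqrt t) := by
  have hst : 0 < Real.sqrt t := Real.sqrt_pos.mpr ht
  rw [integral_Iic_comp_sub]
  have hs := integral_Iic_comp_mul_left (heatKernel1 t) ((a - y) / Real.sqrt t) hst
  rw [mul_div_cancel₀ _ hst.ne'] at hs
  have h5 : ∫ x in Set.Iic (a - y), heatKernel1 t x
      = Real.sqrt t • ∫ x in Set.Iic ((a - y) / Real.sqrt t),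
          heatKernel1 t (Real.sqrt t * x) := by
    rw [hs, smul_smul, mul_inv_cancel₀ hst.ne', one_smul]
  rw [h5, N0, ← integral_smul]
  refine setIntegral_congr_fun measurableSet_Iic fun x _ => ?_
  simpa [smul_eq_mul] using hk_scale ht x

lemma hk_cont (t : ℝ) : Continuous fun p : ℝ × ℝ => heatKernel1 t (p.1 - p.2) := by
  unfold heatKernel1; fun_prop

lemma fubini_step {ρ₀ : ℝ → ℝ} (h0 : ∀ x, 0 ≤ ρ₀ x) (hint : Integrable ρ₀)
    {t : ℝ} (ht : 0 < t) (a : ℝ) :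
    ∫ s in Set.Iic a, ∫ y, ρ₀ y * heatKernel1 t (s - y)
      = ∫ y, ρ₀ y * N0 ((a - y) / Real.sqrt t) := by
  have hmeas : AEStronglyMeasurable (fun p : ℝ × ℝ => ρ₀ p.2 * heatKernel1 t (p.1 - p.2))
      ((volume.restrict (Set.Iic a)).prod volume) :=
    (hint.aestronglyMeasurable.comp_snd).mul (hk_cont t).aestronglyMeasurable
  have hInt : Integrable (fun p : ℝ × ℝ => ρ₀ p.2 * heatKernel1 t (p.1 - p.2))
      ((volume.restrict (Set.Iic a)).prod volume) := by
    rw [integrable_prod_iff' hmeas]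
    constructor
    · refine Filter.Eventually.of_forall fun y => ?_
      exact (((hk_integrable ht).comp_sub_right y).const_mul (ρ₀ y)).integrableOn
    · have heq : ∀ y : ℝ, (∫ s in Set.Iic a, ‖ρ₀ y * heatKernel1 t (s - y)‖)
          = ρ₀ y * N0 ((a - y) / Real.sqrt t) := by
        intro y
        have : ∀ s : ℝ, ‖ρ₀ y * heatKernel1 t (s - y)‖ = ρ₀ y * heatKernel1 t (s - y) := by
          intro s
          rw [Real.norm_eq_abs, abs_of_nonneg (mul_nonneg (h0 y) (hk_nonneg ht _))]
        simp_rw [this]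
        rw [integral_const_mul, hk_cdf ht]
      simp_rw [heq]
      apply Integrable.mono' hint
      · exact hint.aestronglyMeasurable.mul
          (N0_cont.comp (by fun_prop : Continuous fun y : ℝ =>
            (a - y) / Real.sqrt t)).aestronglyMeasurable
      · refine Filter.Eventually.of_forall fun y => ?_
        rw [Real.norm_eq_abs, abs_of_nonneg (mul_nonneg (h0 y) (N0_nonneg _))]
        calc ρ₀ y * N0 ((a - y) / Real.sqrt t) ≤ ρ₀ y * 1 :=
              mul_le_mul_of_nonneg_left (N0_le_one _) (h0 y)
          _ = ρ₀ y := mul_one _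
  have := integral_integral_swap (f := fun s y => ρ₀ y * heatKernel1 t (s - y)) hInt
  rw [this]
  congr 1
  funext y
  rw [integral_const_mul, hk_cdf ht]

/-- For the heat-equation solution `ρ_t = ρ₀ * G^t` with `D = 1`, starting from a
piecewise-continuous mean-zero probability density with finite second moment, the rescaled
distribution functions `F̃_t(x) = ∫_{-∞}^{x√t} ρ_t` converge uniformly to the normal
distribution function `N(x) = ∫_{-∞}^x (4π)^{-1/2} e^{-s²/4} ds`, with rate `O(t^{-1/2})`. -/
theorem rescaled_heat_distribution_functions_uniform_convergence
    (ρ₀ : ℝ → ℝ)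
    (hpc : ∃ S : Set ℝ, S.Finite ∧ ∀ x ∉ S, ContinuousAt ρ₀ x)
    (h0 : ∀ x, 0 ≤ ρ₀ x) (hint : Integrable ρ₀) (hmass : ∫ x, ρ₀ x = 1)
    (hmean : ∫ y, y * ρ₀ y = 0) (hsecond : Integrable (fun y => y ^ 2 * ρ₀ y)) :
    ∃ C' T : ℝ, ∀ t ≥ T, ∀ x : ℝ,
      |(∫ s in Set.Iic (x * Real.sqrt t), ∫ y, ρ₀ y * heatKernel1 t (s - y))
          - ∫ s in Set.Iic x, (4 * π) ^ (-(1 : ℝ) / 2) * Real.exp (-s ^ 2 / 4)|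
        ≤ C' / Real.sqrt t := by
  set M2 : ℝ := ∫ y, y ^ 2 * ρ₀ y with hM2
  have hM2nn : 0 ≤ M2 := integral_nonneg fun y => mul_nonneg (sq_nonneg y) (h0 y)
  refine ⟨M2, 1, fun t ht x => ?_⟩
  have ht0 : (0:ℝ) < t := lt_of_lt_of_le one_pos ht
  have hst : 0 < Real.sqrt t := Real.sqrt_pos.mpr ht0
  -- integrability of y * ρ₀ y
  have hIy : Integrable (fun y => y * ρ₀ y) := by
    apply Integrable.mono' (hint.add hsecond)
    · exact (aestronglyMeasurable_id.mul hint.aestronglyMeasurable)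
    · refine Filter.Eventually.of_forall fun y => ?_
      rw [Real.norm_eq_abs, abs_mul, abs_of_nonneg (h0 y)]
      have h1 : |y| ≤ 1 + y ^ 2 := by nlinarith [sq_abs y, sq_nonneg (|y| - 1)]
      simp only [Pi.add_apply]
      nlinarith [mul_le_mul_of_nonneg_right h1 (h0 y), h0 y, abs_nonneg y]
  -- rewrite LHS via Fubini
  rw [fubini_step h0 hint ht0]
  -- second term is N0 x
  have hgauss : (∫ s in Set.Iic x, (4 * π) ^ (-(1 : ℝ) / 2) * Real.exp (-s ^ 2 / 4)) = N0 x := rfl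
  rw [hgauss]
  -- simplify (x√t - y)/√t
  have harg : ∀ y : ℝ, (x * Real.sqrt t - y) / Real.sqrt t = x - y / Real.sqrt t := by
    intro y; field_simp
  simp_rw [harg]
  -- integrability facts
  have hI1 : Integrable (fun y => ρ₀ y * N0 (x - y / Real.sqrt t)) := by
    apply Integrable.mono' hint
    · exact hint.aestronglyMeasurable.mul
        (N0_cont.comp (by fun_prop : Continuous fun y : ℝ =>
          x - y / Real.sqrt t)).aestronglyMeasurable
    · refine Filter.Eventually.of_forall fun y => ?_
      rw [Real.norm_eq_abs, abs_of_nonneg (mul_nonneg (h0 y) (N0_nonneg _))]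
      calc ρ₀ y * N0 (x - y / Real.sqrt t) ≤ ρ₀ y * 1 :=
            mul_le_mul_of_nonneg_left (N0_le_one _) (h0 y)
        _ = ρ₀ y := mul_one _
  have hI4 : Integrable (fun y => ρ₀ y * (y / Real.sqrt t * gauss0 x)) := by
    have : (fun y => ρ₀ y * (y / Real.sqrt t * gauss0 x))
        = fun y => (y * ρ₀ y) * (gauss0 x / Real.sqrt t) := by
      funext y; field_simp
    rw [this]
    exact hIy.mul_const _
  have hz : (∫ y, ρ₀ y * (y / Real.sqrt t * gauss0 x)) = 0 := by
    have : (fun y => ρ₀ y * (y / Real.sqrt t * gauss0 x))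
        = fun y => (y * ρ₀ y) * (gauss0 x / Real.sqrt t) := by
      funext y; field_simp
    rw [this, integral_mul_const, hmean, zero_mul]
  have hNx : (∫ y, ρ₀ y * N0 x) = N0 x := by
    rw [integral_mul_const, hmass, one_mul]
  have hIE : Integrable (fun y => ρ₀ y *
      (N0 (x - y / Real.sqrt t) - N0 x + y / Real.sqrt t * gauss0 x)) := by
    have hfe : (fun y => ρ₀ y *
        (N0 (x - y / Real.sqrt t) - N0 x + y / Real.sqrt t * gauss0 x))
        = fun y => (ρ₀ y * N0 (x - y / Real.sqrt t) - ρ₀ y * N0 x)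
            + ρ₀ y * (y / Real.sqrt t * gauss0 x) := by
      funext y; ring
    rw [hfe]
    exact (hI1.sub (hint.mul_const _)).add hI4
  have hdiff : (∫ y, ρ₀ y * N0 (x - y / Real.sqrt t)) - N0 x
      = ∫ y, ρ₀ y * (N0 (x - y / Real.sqrt t) - N0 x + y / Real.sqrt t * gauss0 x) := by
    have hfe : ∀ y : ℝ, ρ₀ y *
        (N0 (x - y / Real.sqrt t) - N0 x + y / Real.sqrt t * gauss0 x)
        = (ρ₀ y * N0 (x - y / Real.sqrt t) - ρ₀ y * N0 x)
            + ρ₀ y * (y / Real.sqrt t * gauss0 x) := by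
      intro y; ring
    have hI5 : Integrable (fun y => ρ₀ y * N0 (x - y / Real.sqrt t) - ρ₀ y * N0 x) :=
      hI1.sub (hint.mul_const (N0 x))
    simp_rw [hfe]
    rw [integral_add hI5 hI4, hz, add_zero,
      integral_sub hI1 (hint.mul_const (N0 x)), hNx]
  rw [hdiff]
  have hpt : ∀ y : ℝ, ‖ρ₀ y * (N0 (x - y / Real.sqrt t) - N0 x
      + y / Real.sqrt t * gauss0 x)‖ ≤ (1 / t) * (y ^ 2 * ρ₀ y) := by
    intro y
    rw [Real.norm_eq_abs, abs_mul, abs_of_nonneg (h0 y)]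
    have hT := N0_taylor x (y / Real.sqrt t)
    have hsq : (y / Real.sqrt t) ^ 2 = y ^ 2 / t := by
      rw [div_pow, Real.sq_sqrt ht0.le]
    calc ρ₀ y * |N0 (x - y / Real.sqrt t) - N0 x + y / Real.sqrt t * gauss0 x|
        ≤ ρ₀ y * (y / Real.sqrt t) ^ 2 := mul_le_mul_of_nonneg_left hT (h0 y)
      _ = (1 / t) * (y ^ 2 * ρ₀ y) := by rw [hsq]; ring
  have hbound : |∫ y, ρ₀ y * (N0 (x - y / Real.sqrt t) - N0 x
      + y / Real.sqrt t * gauss0 x)| ≤ (1 / t) * M2 := by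
    have hn := norm_integral_le_integral_norm (μ := volume)
      (fun y => ρ₀ y * (N0 (x - y / Real.sqrt t) - N0 x + y / Real.sqrt t * gauss0 x))
    rw [Real.norm_eq_abs] at hn
    calc |∫ y, ρ₀ y * (N0 (x - y / Real.sqrt t) - N0 x + y / Real.sqrt t * gauss0 x)|
        ≤ ∫ y, ‖ρ₀ y * (N0 (x - y / Real.sqrt t) - N0 x + y / Real.sqrt t * gauss0 x)‖ := hn
      _ ≤ ∫ y, (1 / t) * (y ^ 2 * ρ₀ y) :=
          integral_mono hIE.norm (hsecond.const_mul _) hpt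
      _ = (1 / t) * M2 := by rw [integral_const_mul]
  refine hbound.trans ?_
  have h1t : 1 ≤ Real.sqrt t := by
    rw [show (1:ℝ) = Real.sqrt 1 by simp]
    exact Real.sqrt_le_sqrt ht
  have hsle : Real.sqrt t ≤ t := by nlinarith [Real.sq_sqrt ht0.le]
  have heq : (1 / t) * M2 = M2 / t := by ring
  rw [heq]
  gcongr
end
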